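/- Let $(\rho, \gamma)$ with $\gamma : \mathcal{S} \to \mathbb{R}$ satisfy, for all states $s$ and actions $a \in \mathcal{A}_s$: $\rho + \gamma(s) \ge r(s,a) + \sum_{s'} p(s' \mid s, a)\gamma(s')$, where $r(s,a) \in [0,1]$. Suppose the MDP $(\mathcal{S}, \mathcal{A}, p)$ is communicating with diameter $D$, i.e., for any two states $s, s'$ there is a stationary policy under which the expected hitting time from $s$ to $s'$ is at most $D$. Then $\max_{s,s'} (\gamma(s) - \gamma(s')) \le 2D$ (assuming $\rho \le 1$, which holds when $\rho$ is at most the maximal reward). -/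

import Mathlib

open Finset

/-- Subinvariance lemma: if `Q` is a nonnegative kernel, `h ≥ 0` satisfies
`(row sums of Q) + Q h ≤ h`, and `f ≤ Q f` pointwise, then `f ≤ 0`. -/
theorem sub_invariant_nonpos {S : Type*} [Fintype S] (Q : S → S → ℝ)
    (hQ : ∀ u v, 0 ≤ Q u v) (h f : S → ℝ) (hhnn : ∀ u, 0 ≤ h u)
    (hh : ∀ u, (∑ v, Q u v) + ∑ v, Q u v * h v ≤ h u)
    (hf : ∀ u, f u ≤ ∑ v, Q u v * f v) :
    ∀ u, f u ≤ 0 := by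
  set T : (S → ℝ) → (S → ℝ) := fun g u => ∑ v, Q u v * g v with hT
  have Tmono : ∀ g g' : S → ℝ, (∀ v, g v ≤ g' v) → ∀ u, T g u ≤ T g' u := by
    intro g g' hle u
    exact Finset.sum_le_sum fun v _ => mul_le_mul_of_nonneg_left (hle v) (hQ u v)
  have itermono : ∀ k : ℕ, ∀ g g' : S → ℝ, (∀ v, g v ≤ g' v) →
      ∀ u, T^[k] g u ≤ T^[k] g' u := by
    intro k
    induction k with
    | zero => intro g g' hle u; exact hle u
    | succ k ih =>
      intro g g' hle u
      rw [Function.iterate_succ_apply, Function.iterate_succ_apply]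
      exact ih _ _ (Tmono g g' hle) u
  -- f ≤ T^[k] f
  have hfk : ∀ k : ℕ, ∀ u, f u ≤ T^[k] f u := by
    intro k
    induction k with
    | zero => intro u; simp
    | succ k ih =>
      intro u
      rw [Function.iterate_succ_apply]
      exact le_trans (ih u) (itermono k f (T f) hf u)
  set C : ℝ := ∑ v, |f v| with hC
  have hCnn : 0 ≤ C := Finset.sum_nonneg fun v _ => abs_nonneg _
  have hfC : ∀ v, f v ≤ C := by
    intro v
    calc f v ≤ |f v| := le_abs_self _
    _ ≤ C := Finset.single_le_sum (fun w _ => abs_nonneg (f w)) (Finset.mem_univ v)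
  set e : S → ℝ := fun u => ∑ v, Q u v with he
  have Tsmul : ∀ (c : ℝ) (g : S → ℝ), T (fun v => c * g v) = fun u => c * T g u := by
    intro c g
    funext u
    simp only [hT, Finset.mul_sum]
    exact Finset.sum_congr rfl fun v _ => by ring
  have itersmul : ∀ (k : ℕ) (c : ℝ) (g : S → ℝ),
      T^[k] (fun v => c * g v) = fun u => c * T^[k] g u := by
    intro k
    induction k with
    | zero => intro c g; rfl
    | succ k ih =>
      intro c g
      rw [Function.iterate_succ_apply, Tsmul, ih, Function.iterate_succ_apply]
  have Tconst : T (fun _ => C) = fun u => C * e u := by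
    funext u
    simp only [hT, he, Finset.mul_sum]
    exact Finset.sum_congr rfl fun v _ => by ring
  -- f u ≤ C * T^[k] e u for each k
  have key : ∀ k : ℕ, ∀ u, f u ≤ C * T^[k] e u := by
    intro k u
    have h1 : f u ≤ T^[k+1] f u := hfk (k+1) u
    have h2 : T^[k+1] f u ≤ T^[k+1] (fun _ => C) u := itermono (k+1) _ _ hfC u
    have h3 : T^[k+1] (fun _ => C) u = C * T^[k] e u := by
      rw [Function.iterate_succ_apply, Tconst, itersmul]
    linarith
  -- partial sums of iterates of e are bounded by h
  have sums : ∀ n : ℕ, ∀ u, ∑ k ∈ Finset.range n, T^[k] e u ≤ h u := by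
    intro n
    induction n with
    | zero => intro u; simpa using hhnn u
    | succ n ih =>
      intro u
      rw [Finset.sum_range_succ']
      have heq : ∀ k, T^[k+1] e u = T (T^[k] e) u := fun k => by
        rw [Function.iterate_succ_apply']
      have h1 : ∑ k ∈ Finset.range n, T^[k+1] e u
          = ∑ v, Q u v * ∑ k ∈ Finset.range n, T^[k] e v := by
        rw [Finset.sum_congr rfl fun k _ => heq k]
        simp only [hT]
        rw [Finset.sum_comm]
        exact Finset.sum_congr rfl fun v _ => (Finset.mul_sum _ _ _).symm
      have h2 : ∑ v, Q u v * ∑ k ∈ Finset.range n, T^[k] e v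
          ≤ ∑ v, Q u v * h v :=
        Finset.sum_le_sum fun v _ => mul_le_mul_of_nonneg_left (ih v) (hQ u v)
      have h3 : (T^[0] e) u = e u := rfl
      have := hh u
      simp only [he] at this ⊢
      rw [h3] at *
      linarith [h1 ▸ h2]
  -- conclude
  intro u
  by_contra hpos
  push_neg at hpos
  obtain ⟨n, hn⟩ := exists_nat_gt (C * h u / f u)
  have hn1 : C * h u < n * f u := by
    rwa [div_lt_iff₀ hpos] at hn
  have hsum : (n : ℝ) * f u ≤ C * h u := by
    have h1 : ∀ k ∈ Finset.range n, f u ≤ C * T^[k] e u := fun k _ => key k u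
    have h2 : ∑ k ∈ Finset.range n, f u ≤ ∑ k ∈ Finset.range n, C * T^[k] e u :=
      Finset.sum_le_sum h1
    rw [Finset.sum_const, Finset.card_range, nsmul_eq_mul] at h2
    rw [← Finset.mul_sum] at h2
    calc (n : ℝ) * f u ≤ C * ∑ k ∈ Finset.range n, T^[k] e u := h2
    _ ≤ C * h u := mul_le_mul_of_nonneg_left (sums n u) hCnn
  linarith

/-- Lemma `mc` (Jaksch et al. 2010): any feasible solution of the dual LP for an
average-reward communicating MDP with diameter `D` has bias span at most `2D`. The
diameter hypothesis is encoded via bounded nonnegative solutions of the hitting-time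
Bellman equations. -/
theorem dual_feasible_bias_span_le
    {S : Type*} [Fintype S] {A : S → Type*} [∀ s, Fintype (A s)]
    (p : (s : S) → A s → S → ℝ) (r : (s : S) → A s → ℝ)
    (hr : ∀ s a, 0 ≤ r s a ∧ r s a ≤ 1)
    (hpnn : ∀ s a s', 0 ≤ p s a s') (hpsum : ∀ s a, ∑ s', p s a s' = 1)
    (D : ℝ) (hD : 0 ≤ D)
    (hdiam : ∀ s s' : S, ∃ π : (u : S) → A u, ∃ h : S → ℝ,
      (∀ u, 0 ≤ h u) ∧ h s' = 0 ∧
        (∀ u, u ≠ s' → h u = 1 + ∑ v, p u (π u) v * h v) ∧ h s ≤ D)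
    (ρ : ℝ) (γ : S → ℝ) (hρ : ρ ≤ 1)
    (hfeas : ∀ s a, r s a + ∑ s', p s a s' * γ s' ≤ ρ + γ s) :
    ∀ s s', γ s - γ s' ≤ 2 * D := by
  classical
  intro s s'
  -- policy hitting `s` starting from `s'`
  obtain ⟨π, h, hhnn, hhs, hbell, hhD⟩ := hdiam s' s
  set Q : S → S → ℝ := fun u v => if u = s then 0 else p u (π u) v with hQdef
  have hQnn : ∀ u v, 0 ≤ Q u v := by
    intro u v
    simp only [hQdef]
    split
    · exact le_refl 0
    · exact hpnn u (π u) v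
  set f : S → ℝ := fun u => γ s - γ u - h u with hfdef
  have hh : ∀ u, (∑ v, Q u v) + ∑ v, Q u v * h v ≤ h u := by
    intro u
    by_cases hu : u = s
    · subst hu
      simp [hQdef, hhs]
    · have hb := hbell u hu
      have h1 : (∑ v, Q u v) = 1 := by
        simp only [hQdef, if_neg hu]
        exact hpsum u (π u)
      have h2 : (∑ v, Q u v * h v) = ∑ v, p u (π u) v * h v := by
        simp [hQdef, if_neg hu]
      rw [h1, h2, hb]
  have hf : ∀ u, f u ≤ ∑ v, Q u v * f v := by
    intro u
    by_cases hu : u = s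
    · subst hu
      simp [hfdef, hQdef, hhs]
    · have h2 : (∑ v, Q u v * f v)
          = γ s - (∑ v, p u (π u) v * γ v) - ∑ v, p u (π u) v * h v := by
        simp only [hQdef, if_neg hu, hfdef]
        have : ∀ v, p u (π u) v * (γ s - γ v - h v)
            = p u (π u) v * γ s - p u (π u) v * γ v - p u (π u) v * h v := by
          intro v; ring
        rw [Finset.sum_congr rfl fun v _ => this v]
        rw [Finset.sum_sub_distrib, Finset.sum_sub_distrib, ← Finset.sum_mul,
          hpsum u (π u), one_mul]
      have hfe := hfeas u (π u)
      have hrnn := (hr u (π u)).1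
      have hb := hbell u hu
      rw [h2]
      simp only [hfdef]
      rw [hb]
      linarith
  have := sub_invariant_nonpos Q hQnn h f hhnn hh hf s'
  simp only [hfdef] at this
  linarith
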